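/- There exists a constant C > 0 such that for all real numbers a, b with 0 ≤ a ≤ b, one has Λ(a) + Λ(b) − Λ(a+b) ≤ C · a^{1/2} · (min(a,1))^{1/2} · (min(b,1))², where Λ(ξ) = ξ·√(tanh ξ / ξ) (with Λ(0)=0). -/

import Mathlib

/-- The Whitham dispersion relation, `Λ ξ = ξ * √(tanh ξ / ξ)` (with `Λ 0 = 0`). -/
noncomputable def Lam (ξ : ℝ) : ℝ := ξ * Real.sqrt (Real.tanh ξ / ξ)

namespace ResonanceAux

open Real

lemma tanh_formula (x : ℝ) : Real.tanh x = 1 - 2 / (Real.exp (2 * x) + 1) := by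
  have h1 : (0:ℝ) < Real.exp x := Real.exp_pos x
  have h2 : Real.exp (2 * x) = Real.exp x * Real.exp x := by
    rw [two_mul, Real.exp_add]
  have hc : (0:ℝ) < Real.cosh x := Real.cosh_pos x
  have hd : (0:ℝ) < Real.exp (2 * x) + 1 := by positivity
  rw [Real.tanh_eq_sinh_div_cosh, Real.sinh_eq, Real.cosh_eq, Real.exp_neg]
  rw [h2]
  field_simp
  ring

lemma tanh_lt_one (x : ℝ) : Real.tanh x < 1 := by
  rw [tanh_formula]
  have hd : (0:ℝ) < Real.exp (2 * x) + 1 := by positivity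
  have : 0 < 2 / (Real.exp (2 * x) + 1) := by positivity
  linarith

lemma tanh_monotone : Monotone Real.tanh := by
  intro x y hxy
  rw [tanh_formula, tanh_formula]
  have hx : (0:ℝ) < Real.exp (2 * x) + 1 := by positivity
  have hy : (0:ℝ) < Real.exp (2 * y) + 1 := by positivity
  have h : Real.exp (2 * x) ≤ Real.exp (2 * y) := Real.exp_le_exp.2 (by linarith)
  have : 2 / (Real.exp (2 * y) + 1) ≤ 2 / (Real.exp (2 * x) + 1) :=
    div_le_div_of_nonneg_left (by norm_num) hx (by linarith)
  linarith

lemma tanh_nonneg {x : ℝ} (hx : 0 ≤ x) : 0 ≤ Real.tanh x := by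
  have := tanh_monotone hx
  rwa [Real.tanh_zero] at this

lemma hasDerivAt_tanh (x : ℝ) : HasDerivAt Real.tanh (1 - Real.tanh x ^ 2) x := by
  have hc : Real.cosh x ≠ 0 := (Real.cosh_pos x).ne'
  have h := (Real.hasDerivAt_sinh x).div (Real.hasDerivAt_cosh x) hc
  have heq : Real.tanh = fun x => Real.sinh x / Real.cosh x :=
    funext fun x => Real.tanh_eq_sinh_div_cosh x
  rw [heq]
  refine h.congr_deriv ?_
  have hs := Real.cosh_sq_sub_sinh_sq x
  beta_reduce
  field_simp

lemma continuous_tanh : Continuous Real.tanh := by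
  have heq : Real.tanh = fun x => Real.sinh x / Real.cosh x :=
    funext fun x => Real.tanh_eq_sinh_div_cosh x
  rw [heq]
  exact Real.continuous_sinh.div Real.continuous_cosh fun x => (Real.cosh_pos x).ne'

lemma tanh_le_self {x : ℝ} (hx : 0 ≤ x) : Real.tanh x ≤ x := by
  -- F t = t * cosh t - sinh t is monotone on [0, ∞)
  set F : ℝ → ℝ := fun t => t * Real.cosh t - Real.sinh t with hF
  have hDer : ∀ t : ℝ, HasDerivAt F (t * Real.sinh t) t := by
    intro t
    have h := ((hasDerivAt_id t).mul (Real.hasDerivAt_cosh t)).sub (Real.hasDerivAt_sinh t)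
    refine h.congr_deriv ?_
    simp only [id_eq]
    ring
  have hmono : MonotoneOn F (Set.Ici 0) := by
    apply monotoneOn_of_deriv_nonneg (convex_Ici 0)
    · exact fun t _ => (hDer t).continuousAt.continuousWithinAt
    · intro t ht
      exact ((hDer t).differentiableAt).differentiableWithinAt
    · intro t ht
      rw [interior_Ici] at ht
      rw [(hDer t).deriv]
      have ht' : (0:ℝ) < t := ht
      have : 0 ≤ Real.sinh t := by
        rw [← Real.sinh_zero]
        exact Real.sinh_le_sinh.2 ht'.le
      positivity
  have h0 : F 0 ≤ F x := hmono (by simp) (by simpa using hx) hx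
  have hF0 : F 0 = 0 := by simp [hF]
  have hFx : Real.sinh x ≤ x * Real.cosh x := by
    have := h0; rw [hF0] at this; simp only [hF] at this; linarith
  rw [Real.tanh_eq_sinh_div_cosh, div_le_iff₀ (Real.cosh_pos x)]
  linarith

lemma tanh_ge_cubic {x : ℝ} (hx : 0 ≤ x) : x - x ^ 3 / 3 ≤ Real.tanh x := by
  set q : ℝ → ℝ := fun t => Real.tanh t - t + t ^ 3 / 3 with hq
  have hDer : ∀ t : ℝ, HasDerivAt q (t ^ 2 - Real.tanh t ^ 2) t := by
    intro t
    have h := ((hasDerivAt_tanh t).sub (hasDerivAt_id t)).add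
      ((hasDerivAt_pow 3 t).div_const 3)
    refine h.congr_deriv ?_
    ring
  have hmono : MonotoneOn q (Set.Ici 0) := by
    apply monotoneOn_of_deriv_nonneg (convex_Ici 0)
    · exact fun t _ => (hDer t).continuousAt.continuousWithinAt
    · intro t ht
      exact ((hDer t).differentiableAt).differentiableWithinAt
    · intro t ht
      rw [interior_Ici] at ht
      rw [(hDer t).deriv]
      have ht' : (0:ℝ) < t := ht
      have h1 : Real.tanh t ≤ t := tanh_le_self ht'.le
      have h2 : 0 ≤ Real.tanh t := tanh_nonneg ht'.le
      nlinarith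
  have h0 : q 0 ≤ q x := hmono (by simp) (by simpa using hx) hx
  have hq0 : q 0 = 0 := by simp [hq]
  rw [hq0] at h0
  simp only [hq] at h0
  linarith

lemma tanh_one_ge : (1:ℝ) / 2 ≤ Real.tanh 1 := by
  rw [tanh_formula]
  have he : (2:ℝ) ≤ Real.exp 1 := by
    have := Real.add_one_le_exp 1
    linarith
  have h2 : (4:ℝ) ≤ Real.exp (2 * 1) := by
    have : Real.exp (2 * 1) = Real.exp 1 * Real.exp 1 := by
      rw [two_mul, Real.exp_add]
    nlinarith
  have hd : (0:ℝ) < Real.exp (2 * 1) + 1 := by positivity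
  have : 2 / (Real.exp (2 * 1) + 1) ≤ 2 / 5 := by
    apply div_le_div_of_nonneg_left (by norm_num) (by norm_num)
    linarith
  linarith

lemma tanh_ge_quarter {x : ℝ} (hx : 0 ≤ x) (hx2 : x ≤ 2) : x / 4 ≤ Real.tanh x := by
  rcases le_total x 1 with h | h
  · have := tanh_ge_cubic hx
    have hx3 : x ^ 3 ≤ x := by nlinarith [mul_nonneg hx (by nlinarith : (0:ℝ) ≤ 1 - x * x)]
    nlinarith
  · have h1 : Real.tanh 1 ≤ Real.tanh x := tanh_monotone h
    have := tanh_one_ge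
    linarith

lemma lam_eq {ξ : ℝ} (hξ : 0 ≤ ξ) : Lam ξ = Real.sqrt (ξ * Real.tanh ξ) := by
  rcases eq_or_lt_of_le hξ with h | h
  · simp [Lam, ← h]
  · unfold Lam
    rw [show ξ * Real.tanh ξ = ξ ^ 2 * (Real.tanh ξ / ξ) by field_simp,
      Real.sqrt_mul (sq_nonneg ξ), Real.sqrt_sq h.le]

lemma lam_le_self {ξ : ℝ} (hξ : 0 ≤ ξ) : Lam ξ ≤ ξ := by
  rw [lam_eq hξ]
  calc Real.sqrt (ξ * Real.tanh ξ) ≤ Real.sqrt (ξ * ξ) := by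
        apply Real.sqrt_le_sqrt
        exact mul_le_mul_of_nonneg_left (tanh_le_self hξ) hξ
    _ = ξ := Real.sqrt_mul_self hξ

/-- Key estimate: with `h t = t - √(t tanh t)`, `h y - h x ≤ y² (y - x)` on `(0, 2]`. -/
lemma key {x y : ℝ} (hx : 0 < x) (hxy : x ≤ y) (hy2 : y ≤ 2) :
    (y - Real.sqrt (y * Real.tanh y)) - (x - Real.sqrt (x * Real.tanh x)) ≤
      y ^ 2 * (y - x) := by
  set g : ℝ → ℝ := fun t => y ^ 2 * t - t + Real.sqrt (t * Real.tanh t) with hg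
  have hDer : ∀ t : ℝ, 0 < t → t ≤ 2 →
      HasDerivAt g (y ^ 2 - 1 +
        (1 * Real.tanh t + t * (1 - Real.tanh t ^ 2)) / (2 * Real.sqrt (t * Real.tanh t))) t := by
    intro t ht ht2
    have htanh : 0 < Real.tanh t := lt_of_lt_of_le (by positivity) (tanh_ge_quarter ht.le ht2)
    have hv : HasDerivAt (fun t => t * Real.tanh t)
        (1 * Real.tanh t + t * (1 - Real.tanh t ^ 2)) t :=
      (hasDerivAt_id t).mul (hasDerivAt_tanh t)
    have hne : t * Real.tanh t ≠ 0 := by positivity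
    have hsq := hv.sqrt hne
    have h1 := ((hasDerivAt_id t).const_mul (y ^ 2)).sub (hasDerivAt_id t)
    have := h1.add hsq
    refine this.congr_deriv ?_
    ring
  have hmono : MonotoneOn g (Set.Icc x y) := by
    apply monotoneOn_of_deriv_nonneg (convex_Icc x y)
    · apply Continuous.continuousOn
      exact ((continuous_const.mul continuous_id).sub continuous_id).add
        (Real.continuous_sqrt.comp (continuous_id.mul continuous_tanh))
    · intro t ht
      rw [interior_Icc] at ht
      have ht0 : 0 < t := lt_trans hx ht.1
      have ht2 : t ≤ 2 := le_trans ht.2.le hy2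
      exact (hDer t ht0 ht2).differentiableAt.differentiableWithinAt
    · intro t ht
      rw [interior_Icc] at ht
      have ht0 : 0 < t := lt_trans hx ht.1
      have ht2 : t ≤ 2 := le_trans ht.2.le hy2
      rw [(hDer t ht0 ht2).deriv]
      have htanh : 0 < Real.tanh t := lt_of_lt_of_le (by positivity) (tanh_ge_quarter ht0.le ht2)
      set s := Real.sqrt (t * Real.tanh t) with hs
      have hs0 : 0 < s := Real.sqrt_pos.2 (by positivity)
      have hssq : s ^ 2 = t * Real.tanh t := Real.sq_sqrt (by positivity)
      -- AM-GM : 2 s ≤ t + tanh t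
      have ham : 2 * s ≤ t + Real.tanh t := by
        nlinarith [sq_nonneg (t - Real.tanh t), sq_nonneg (t + Real.tanh t - 2 * s)]
      -- s ≥ t / 2
      have hsge : t / 2 ≤ s := by
        have h4 : t / 4 ≤ Real.tanh t := tanh_ge_quarter ht0.le ht2
        nlinarith [sq_nonneg (s - t / 2)]
      have hta : Real.tanh t ≤ t := tanh_le_self ht0.le
      have hty : t ≤ y := ht.2.le
      -- main inequality: (1 - y²) * (2 s) ≤ tanh t + t (1 - tanh² t)
      have hmain : (1 - y ^ 2) * (2 * s) ≤ 1 * Real.tanh t + t * (1 - Real.tanh t ^ 2) := by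
        have h1 : t * Real.tanh t ^ 2 ≤ 2 * s * t ^ 2 := by nlinarith
        have h2 : (1 - t ^ 2) * (2 * s) ≤ t + Real.tanh t - t * Real.tanh t ^ 2 := by
          nlinarith
        have hty2 : t ^ 2 ≤ y ^ 2 := by nlinarith
        have h3 : (1 - y ^ 2) * (2 * s) ≤ (1 - t ^ 2) * (2 * s) :=
          mul_le_mul_of_nonneg_right (by linarith) (by positivity)
        nlinarith
      have hdiv : 1 - y ^ 2 ≤
          (1 * Real.tanh t + t * (1 - Real.tanh t ^ 2)) / (2 * s) := by
        rw [le_div_iff₀ (by positivity)]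
        linarith [hmain]
      linarith
  have h0 : g x ≤ g y := hmono (by constructor <;> linarith) (by constructor <;> linarith) hxy
  simp only [hg] at h0
  nlinarith [h0]

end ResonanceAux

open ResonanceAux in
/-- Upper bound of the subadditivity defect:
for `0 ≤ a ≤ b`, `Λ a + Λ b - Λ (a+b) ≲ a^{1/2} (a ∧ 1)^{1/2} (b ∧ 1)²`. -/
theorem resonance_upper_bound :
    ∃ C > (0 : ℝ), ∀ a b : ℝ, 0 ≤ a → a ≤ b →
      Lam a + Lam b - Lam (a + b) ≤
        C * Real.sqrt a * Real.sqrt (min a 1) * (min b 1) ^ 2 := by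
  refine ⟨10, by norm_num, fun a b ha hab => ?_⟩
  have hb : 0 ≤ b := le_trans ha hab
  rcases eq_or_lt_of_le ha with h | ha'
  · -- a = 0
    have h0 : a = 0 := h.symm
    subst h0
    have : Lam 0 = 0 := by simp [Lam]
    rw [this]
    simp only [zero_add]
    have hRHS : 0 ≤ 10 * Real.sqrt 0 * Real.sqrt (min 0 1) * (min b 1) ^ 2 := by
      simp
    linarith
  · -- a > 0
    have hLa := lam_eq ha
    have hLb := lam_eq hb
    have hLab := lam_eq (by linarith : (0:ℝ) ≤ a + b)
    rcases le_total b 1 with hb1 | hb1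
    · -- case b ≤ 1
      have ha1 : a ≤ 1 := le_trans hab hb1
      have hmina : min a 1 = a := min_eq_left ha1
      have hminb : min b 1 = b := min_eq_left hb1
      rw [hmina, hminb]
      have hsq : Real.sqrt a * Real.sqrt a = a := Real.mul_self_sqrt ha
      have hk := key (lt_of_lt_of_le ha' hab) (by linarith : b ≤ a + b)
        (by linarith : a + b ≤ 2)
      -- h a ≥ 0, i.e. Lam a ≤ a
      have hha : Real.sqrt (a * Real.tanh a) ≤ a := by
        rw [← lam_eq ha]; exact lam_le_self ha
      have hab2 : (a + b) ^ 2 * ((a + b) - b) ≤ 4 * a * b ^ 2 := by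
        have h1 : a * (a * a) ≤ a * (b * b) :=
          mul_le_mul_of_nonneg_left (mul_le_mul hab hab ha hb) ha
        have h2 : (a * b) * a ≤ (a * b) * b :=
          mul_le_mul_of_nonneg_left hab (mul_nonneg ha hb)
        nlinarith [h1, h2]
      rw [hLa, hLb, hLab]
      have : Real.sqrt (a * Real.tanh a) + Real.sqrt (b * Real.tanh b)
          - Real.sqrt ((a + b) * Real.tanh (a + b)) ≤ 4 * a * b ^ 2 := by
        nlinarith [hk]
      calc Real.sqrt (a * Real.tanh a) + Real.sqrt (b * Real.tanh b)
            - Real.sqrt ((a + b) * Real.tanh (a + b)) ≤ 4 * a * b ^ 2 := this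
        _ ≤ 10 * a * b ^ 2 := by nlinarith [sq_nonneg b]
        _ = 10 * Real.sqrt a * Real.sqrt a * b ^ 2 := by linear_combination (-10 * b ^ 2) * hsq
    · -- case 1 ≤ b
      have hminb : min b 1 = 1 := min_eq_right hb1
      rw [hminb]
      -- Lam b ≤ Lam (a + b)
      have hmono : Lam b ≤ Lam (a + b) := by
        rw [hLb, hLab]
        apply Real.sqrt_le_sqrt
        have h1 : Real.tanh b ≤ Real.tanh (a + b) := tanh_monotone (by linarith)
        have h2 : 0 ≤ Real.tanh b := tanh_nonneg hb
        nlinarith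
      -- Lam a ≤ √a √(min a 1)
      have hLa' : Lam a ≤ Real.sqrt a * Real.sqrt (min a 1) := by
        rw [hLa, ← Real.sqrt_mul ha]
        apply Real.sqrt_le_sqrt
        apply mul_le_mul_of_nonneg_left _ ha
        exact le_min (tanh_le_self ha) (tanh_lt_one a).le
      have hnn : 0 ≤ Real.sqrt a * Real.sqrt (min a 1) := by positivity
      calc Lam a + Lam b - Lam (a + b) ≤ Lam a := by linarith
        _ ≤ Real.sqrt a * Real.sqrt (min a 1) := hLa'
        _ ≤ 10 * Real.sqrt a * Real.sqrt (min a 1) * 1 ^ 2 := by nlinarith [hnn]
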